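/- Fix λ > 0 and μ > 0, and let P_n(t) = Σ_{j=0}^n p_j(t). For the first-crossing time T of the iterated Poisson process through the constant boundary k, whose survival function is P(T > t) = P_{k-1}(t), the first-crossing density ψ(t) = -d/dt P_{k-1}(t) satisfies: for k = 1, ψ(t) = λ(1-e^{-μ}) e^{-λ(1-e^{-μ})t} (i.e., T is exponential with parameter λ(1-e^{-μ})); and for every integer k ≥ 2 and t > 0, ψ(t) = p_0(t) λ(1-e^{-μ}) [1 + Σ_{i=1}^{k-1} (λ e^{-μ} t)^i C(i; k-1)] - p_0(t) λ e^{-μ} Σ_{i=1}^{k-1} i (λ e^{-μ} t)^{i-1} C(i; k-1), where C(i; k-1) := Σ_{j=i}^{k-1} S_2(j,i) μ^j/j! and p_0(t) = e^{-λt(1-e^{-μ})}. -/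

import Mathlib

open scoped BigOperators
open Filter MeasureTheory

/-- Bell polynomial: `B n x = e^{-x} * Σ_{k=0}^∞ k^n x^k / k!` (n-th moment of Poisson(x)). -/
noncomputable def bell (n : ℕ) (x : ℝ) : ℝ :=
  Real.exp (-x) * ∑' k : ℕ, (k : ℝ) ^ n * x ^ k / (Nat.factorial k : ℝ)

/-- pmf of the iterated Poisson process:
`p_m(t) = e^{-λt(1-e^{-μ})} (μ^m/m!) B_m(λ t e^{-μ})`. -/
noncomputable def iterP (lam mu t : ℝ) (m : ℕ) : ℝ :=
  Real.exp (-lam * t * (1 - Real.exp (-mu))) * (mu ^ m / (Nat.factorial m : ℝ)) *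
    bell m (lam * t * Real.exp (-mu))

/-- Stirling numbers of the second kind:
`S2 n k = (1/k!) Σ_{i=0}^k (-1)^i C(k,i) (k-i)^n`. -/
noncomputable def S2 (n k : ℕ) : ℝ :=
  (1 / (Nat.factorial k : ℝ)) * ∑ i ∈ Finset.range (k + 1),
    (-1 : ℝ) ^ i * (Nat.choose k i : ℝ) * ((k - i : ℕ) : ℝ) ^ n



noncomputable def Dn (n i : ℕ) : ℝ :=
  ∑ j ∈ Finset.range (i + 1), (-1 : ℝ) ^ (i - j) * (Nat.choose i j : ℝ) * (j : ℝ) ^ n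

lemma neg_one_pow_sub {i j : ℕ} (h : j ≤ i) :
    (-1 : ℝ) ^ (i - j) = (-1 : ℝ) ^ i * (-1 : ℝ) ^ j := by
  have h1 : ((-1 : ℝ) ^ j) * ((-1 : ℝ) ^ j) = 1 := by
    rw [← mul_pow]; norm_num
  calc (-1 : ℝ) ^ (i - j) = (-1 : ℝ) ^ (i - j) * (((-1 : ℝ) ^ j) * ((-1 : ℝ) ^ j)) := by
        rw [h1, mul_one]
    _ = ((-1 : ℝ) ^ (i - j) * (-1 : ℝ) ^ j) * (-1 : ℝ) ^ j := by ring
    _ = (-1 : ℝ) ^ i * (-1 : ℝ) ^ j := by rw [← pow_add, Nat.sub_add_cancel h]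

lemma alt_choose_real (i : ℕ) :
    ∑ j ∈ Finset.range (i + 1), (-1 : ℝ) ^ j * (Nat.choose i j : ℝ)
      = if i = 0 then 1 else 0 := by
  have h := Int.alternating_sum_range_choose (n := i)
  have h2 := congrArg (fun z : ℤ => (z : ℝ)) h
  push_cast at h2
  simpa using h2

lemma Dn_zero (i : ℕ) : Dn 0 i = if i = 0 then 1 else 0 := by
  have h : Dn 0 i = (-1 : ℝ) ^ i * ∑ j ∈ Finset.range (i + 1),
      (-1 : ℝ) ^ j * (Nat.choose i j : ℝ) := by
    unfold Dn
    rw [Finset.mul_sum]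
    apply Finset.sum_congr rfl
    intro j hj
    rw [Finset.mem_range, Nat.lt_succ_iff] at hj
    rw [pow_zero, mul_one, neg_one_pow_sub hj]; ring
  rw [h, alt_choose_real]
  by_cases hi : i = 0 <;> simp [hi]

lemma Dn_vanish : ∀ n : ℕ, ∀ i : ℕ, n < i → Dn n i = 0 := by
  intro n
  induction n using Nat.strong_induction_on with
  | _ n IH =>
    intro i hi
    match n, hi with
    | 0, hi =>
      rw [Dn_zero, if_neg (by omega : i ≠ 0)]
    | (m + 1), hi =>
      obtain ⟨i', rfl⟩ : ∃ i', i = i' + 1 := ⟨i - 1, by omega⟩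
      have hmi : m < i' := by omega
      have step : Dn (m + 1) (i' + 1)
          = ((i' : ℝ) + 1) * ∑ r ∈ Finset.range (m + 1),
              (Nat.choose m r : ℝ) * Dn r i' := by
        unfold Dn
        rw [Finset.sum_range_succ']
        have h0 : (-1 : ℝ) ^ (i' + 1 - 0) * (Nat.choose (i' + 1) 0 : ℝ) * ((0 : ℕ) : ℝ) ^ (m + 1)
            = 0 := by
          simp [pow_succ]
        rw [h0, add_zero]
        have hterm : ∀ s ∈ Finset.range (i' + 1),
            (-1 : ℝ) ^ (i' + 1 - (s + 1)) * (Nat.choose (i' + 1) (s + 1) : ℝ)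
                * ((s + 1 : ℕ) : ℝ) ^ (m + 1)
              = ((i' : ℝ) + 1) * ∑ r ∈ Finset.range (m + 1),
                  (Nat.choose m r : ℝ) *
                    ((-1 : ℝ) ^ (i' - s) * (Nat.choose i' s : ℝ) * (s : ℝ) ^ r) := by
          intro s hs
          have hsub : i' + 1 - (s + 1) = i' - s := by omega
          have hchoose : (Nat.choose (i' + 1) (s + 1) : ℝ) * ((s : ℝ) + 1)
              = ((i' : ℝ) + 1) * (Nat.choose i' s : ℝ) := by
            have := Nat.add_one_mul_choose_eq i' s
            have h2 := congrArg (fun z : ℕ => (z : ℝ)) this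
            push_cast at h2
            linarith [h2]
          have hbin : ((s : ℝ) + 1) ^ m
              = ∑ r ∈ Finset.range (m + 1), (s : ℝ) ^ r * (Nat.choose m r : ℝ) := by
            have := add_pow (s : ℝ) 1 m
            simpa using this
          push_cast
          rw [show ((s:ℝ) + 1) ^ (m+1) = (((s:ℝ)+1) * ((s:ℝ)+1)^m) from by ring]
          rw [hbin, Finset.mul_sum, Finset.mul_sum]
          rw [Finset.mul_sum]
          apply Finset.sum_congr rfl
          intro r hr
          have : (-1 : ℝ) ^ (i' - s) * (Nat.choose (i' + 1) (s + 1) : ℝ)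
                * (((s : ℝ) + 1) * ((s : ℝ) ^ r * (Nat.choose m r : ℝ)))
              = ((Nat.choose (i' + 1) (s + 1) : ℝ) * ((s : ℝ) + 1)) *
                  ((-1 : ℝ) ^ (i' - s) * ((s : ℝ) ^ r * (Nat.choose m r : ℝ))) := by ring
          rw [this, hchoose]
          ring
        rw [Finset.sum_congr rfl hterm, ← Finset.mul_sum]
        congr 1
        rw [Finset.sum_comm]
        apply Finset.sum_congr rfl
        intro r hr
        rw [← Finset.mul_sum]
      rw [step]
      have : ∀ r ∈ Finset.range (m + 1), (Nat.choose m r : ℝ) * Dn r i' = 0 := by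
        intro r hr
        rw [Finset.mem_range, Nat.lt_succ_iff] at hr
        rw [IH r (by omega) i' (by omega), mul_zero]
      rw [Finset.sum_congr rfl this, Finset.sum_const_zero, mul_zero]

lemma trino {j d k : ℕ} (h : j + d ≤ k) :
    (Nat.choose k (j + d) : ℝ) * (Nat.choose (j + d) j : ℝ)
      = (Nat.choose k j : ℝ) * (Nat.choose (k - j) d : ℝ) := by
  have h1 : j ≤ k := le_trans (Nat.le_add_right _ _) h
  have h2 : j ≤ j + d := Nat.le_add_right _ _
  have h3 : d ≤ k - j := by omega
  rw [Nat.cast_choose ℝ h, Nat.cast_choose ℝ h1, Nat.cast_choose ℝ h2, Nat.cast_choose ℝ h3]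
  have e1 : j + d - j = d := by omega
  have e2 : k - (j + d) = k - j - d := by omega
  rw [e1, e2]
  have f0 : ∀ m : ℕ, (Nat.factorial m : ℝ) ≠ 0 := fun m =>
    Nat.cast_ne_zero.mpr (Nat.factorial_ne_zero m)
  field_simp

lemma innerAlt (j k N : ℕ) (hk : k ≤ N) (hj : j ≤ N) :
    ∑ i ∈ Finset.Icc j N, (-1 : ℝ) ^ (i - j) * (Nat.choose k i : ℝ) * (Nat.choose i j : ℝ)
      = if j = k then 1 else 0 := by
  by_cases hjk : j ≤ k
  · have hsub : Finset.Icc j k ⊆ Finset.Icc j N := Finset.Icc_subset_Icc_right hk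
    rw [← Finset.sum_subset hsub (by
      intro i hi hni
      have h1 : k < i := by
        simp only [Finset.mem_Icc] at hi hni; omega
      rw [Nat.choose_eq_zero_of_lt h1]
      simp)]
    rw [← Finset.Ico_add_one_right_eq_Icc, Finset.sum_Ico_eq_sum_range]
    have hrange : k + 1 - j = (k - j) + 1 := by omega
    rw [hrange]
    have hterm : ∀ d ∈ Finset.range (k - j + 1),
        (-1 : ℝ) ^ (j + d - j) * (Nat.choose k (j + d) : ℝ) * (Nat.choose (j + d) j : ℝ)
          = (Nat.choose k j : ℝ) * ((-1 : ℝ) ^ d * (Nat.choose (k - j) d : ℝ)) := by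
      intro d hd
      rw [Finset.mem_range] at hd
      have hdk : j + d ≤ k := by omega
      have e : j + d - j = d := by omega
      rw [e]
      have := trino hdk
      calc (-1 : ℝ) ^ d * (Nat.choose k (j + d) : ℝ) * (Nat.choose (j + d) j : ℝ)
          = (-1 : ℝ) ^ d * ((Nat.choose k (j + d) : ℝ) * (Nat.choose (j + d) j : ℝ)) := by ring
        _ = (-1 : ℝ) ^ d * ((Nat.choose k j : ℝ) * (Nat.choose (k - j) d : ℝ)) := by rw [this]
        _ = (Nat.choose k j : ℝ) * ((-1 : ℝ) ^ d * (Nat.choose (k - j) d : ℝ)) := by ring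
    rw [Finset.sum_congr rfl hterm, ← Finset.mul_sum, alt_choose_real]
    by_cases hjk2 : j = k
    · subst hjk2; simp
    · have : k - j ≠ 0 := by omega
      rw [if_neg this, if_neg hjk2, mul_zero]
  · have : ∀ i ∈ Finset.Icc j N,
        (-1 : ℝ) ^ (i - j) * (Nat.choose k i : ℝ) * (Nat.choose i j : ℝ) = 0 := by
      intro i hi
      rw [Finset.mem_Icc] at hi
      have : k < i := by omega
      rw [Nat.choose_eq_zero_of_lt this]
      simp
    rw [Finset.sum_congr rfl this, Finset.sum_const_zero, if_neg (by omega)]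

lemma key_pow (n k : ℕ) :
    (k : ℝ) ^ n = ∑ i ∈ Finset.range (n + 1), (Nat.choose k i : ℝ) * Dn n i := by
  set N := max n k with hN
  have hnN : n ≤ N := le_max_left _ _
  have hkN : k ≤ N := le_max_right _ _
  have ext : ∑ i ∈ Finset.range (n + 1), (Nat.choose k i : ℝ) * Dn n i
      = ∑ i ∈ Finset.range (N + 1), (Nat.choose k i : ℝ) * Dn n i := by
    apply Finset.sum_subset
    · apply Finset.range_subset_range.mpr; omega
    · intro i hi hni
      have : n < i := by
        simp only [Finset.mem_range] at hi hni; omega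
      rw [Dn_vanish n i this, mul_zero]
  rw [ext]
  unfold Dn
  have swap : ∑ i ∈ Finset.range (N + 1), (Nat.choose k i : ℝ) *
        ∑ j ∈ Finset.range (i + 1), (-1 : ℝ) ^ (i - j) * (Nat.choose i j : ℝ) * (j : ℝ) ^ n
      = ∑ j ∈ Finset.range (N + 1), ∑ i ∈ Finset.Icc j N,
          (Nat.choose k i : ℝ) * ((-1 : ℝ) ^ (i - j) * (Nat.choose i j : ℝ) * (j : ℝ) ^ n) := by
    simp_rw [Finset.mul_sum]
    apply Finset.sum_comm'
    intro i j
    simp only [Finset.mem_range, Finset.mem_Icc]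
    omega
  rw [swap]
  have inner : ∀ j ∈ Finset.range (N + 1),
      ∑ i ∈ Finset.Icc j N,
          (Nat.choose k i : ℝ) * ((-1 : ℝ) ^ (i - j) * (Nat.choose i j : ℝ) * (j : ℝ) ^ n)
        = (j : ℝ) ^ n * (if j = k then 1 else 0) := by
    intro j hj
    rw [Finset.mem_range] at hj
    have := innerAlt j k N hkN (by omega)
    rw [← this, Finset.mul_sum]
    apply Finset.sum_congr rfl
    intro i hi
    ring
  rw [Finset.sum_congr rfl inner]
  have last : ∀ j ∈ Finset.range (N + 1),
      (j : ℝ) ^ n * (if j = k then 1 else 0) = if j = k then (k : ℝ) ^ n else 0 := by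
    intro j _
    by_cases h : j = k <;> simp [h]
  rw [Finset.sum_congr rfl last, Finset.sum_ite_eq' (Finset.range (N + 1)) k fun _ => (k : ℝ) ^ n,
    if_pos (Finset.mem_range.mpr (by omega))]

lemma exp_eq_tsum_real (x : ℝ) : Real.exp x = ∑' n : ℕ, x ^ n / (Nat.factorial n : ℝ) := by
  rw [Real.exp_eq_exp_ℝ, NormedSpace.exp_eq_tsum_div]

lemma hasSum_exp_real (x : ℝ) :
    HasSum (fun n : ℕ => x ^ n / (Nat.factorial n : ℝ)) (Real.exp x) := by
  rw [exp_eq_tsum_real]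
  exact (Real.summable_pow_div_factorial x).hasSum

lemma hasSum_choose (i : ℕ) (x : ℝ) :
    HasSum (fun k : ℕ => (Nat.choose k i : ℝ) * x ^ k / (Nat.factorial k : ℝ))
      (x ^ i / (Nat.factorial i : ℝ) * Real.exp x) := by
  set g : ℕ → ℝ := fun k => (Nat.choose k i : ℝ) * x ^ k / (Nat.factorial k : ℝ) with hg
  have hshift : ∀ n : ℕ, g (n + i)
      = x ^ i / (Nat.factorial i : ℝ) * (x ^ n / (Nat.factorial n : ℝ)) := by
    intro n
    have hle : i ≤ n + i := Nat.le_add_left _ _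
    have hfact : ((n + i).choose i : ℝ) * (Nat.factorial i : ℝ) * (Nat.factorial n : ℝ)
        = ((n + i).factorial : ℝ) := by
      have := Nat.choose_mul_factorial_mul_factorial hle
      rw [Nat.add_sub_cancel] at this
      exact_mod_cast this
    have f0 : ∀ m : ℕ, (Nat.factorial m : ℝ) ≠ 0 := fun m =>
      Nat.cast_ne_zero.mpr (Nat.factorial_ne_zero m)
    rw [hg]
    simp only
    rw [pow_add]
    field_simp
    linear_combination (x ^ n * x ^ i) * hfact
  have h1 : HasSum (fun n : ℕ => g (n + i))
      (x ^ i / (Nat.factorial i : ℝ) * Real.exp x) := by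
    rw [funext hshift]
    exact (hasSum_exp_real x).mul_left _
  have h2 := (hasSum_nat_add_iff (f := g) i).mp h1
  have h3 : ∑ j ∈ Finset.range i, g j = 0 := by
    apply Finset.sum_eq_zero
    intro j hj
    rw [Finset.mem_range] at hj
    rw [hg]
    simp only
    rw [Nat.choose_eq_zero_of_lt hj]
    simp
  rwa [h3, add_zero] at h2

lemma bell_eq_poly (n : ℕ) (x : ℝ) :
    Real.exp x * ∑ i ∈ Finset.range (n + 1),
        (Dn n i / (Nat.factorial i : ℝ)) * x ^ i
      = ∑' k : ℕ, (k : ℝ) ^ n * x ^ k / (Nat.factorial k : ℝ) := by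
  have hterm : ∀ k : ℕ, (k : ℝ) ^ n * x ^ k / (Nat.factorial k : ℝ)
      = ∑ i ∈ Finset.range (n + 1),
          Dn n i * ((Nat.choose k i : ℝ) * x ^ k / (Nat.factorial k : ℝ)) := by
    intro k
    rw [key_pow n k, Finset.sum_mul, Finset.sum_div]
    apply Finset.sum_congr rfl
    intro i _
    ring
  rw [tsum_congr hterm]
  rw [Summable.tsum_finsetSum (fun i _ => ((hasSum_choose i x).summable.mul_left (Dn n i)))]
  have : ∀ i ∈ Finset.range (n + 1),
      ∑' k : ℕ, Dn n i * ((Nat.choose k i : ℝ) * x ^ k / (Nat.factorial k : ℝ))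
        = Dn n i * (x ^ i / (Nat.factorial i : ℝ) * Real.exp x) := by
    intro i _
    rw [tsum_mul_left, (hasSum_choose i x).tsum_eq]
  rw [Finset.sum_congr rfl this, Finset.mul_sum]
  apply Finset.sum_congr rfl
  intro i _
  ring

lemma S2_eq_Dn (n i : ℕ) : S2 n i = Dn n i / (Nat.factorial i : ℝ) := by
  have h : ∑ m ∈ Finset.range (i + 1),
      (-1 : ℝ) ^ m * (Nat.choose i m : ℝ) * ((i - m : ℕ) : ℝ) ^ n = Dn n i := by
    rw [← Finset.sum_range_reflect]
    unfold Dn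
    apply Finset.sum_congr rfl
    intro j hj
    rw [Finset.mem_range, Nat.lt_succ_iff] at hj
    have e1 : i + 1 - 1 - j = i - j := by omega
    rw [e1]
    have e2 : i - (i - j) = j := by omega
    rw [e2, Nat.choose_symm hj]
  unfold S2
  rw [h]
  ring

lemma bell_poly (n : ℕ) (x : ℝ) :
    bell n x = ∑ i ∈ Finset.range (n + 1), S2 n i * x ^ i := by
  unfold bell
  rw [← bell_eq_poly, ← mul_assoc, ← Real.exp_add, neg_add_cancel, Real.exp_zero, one_mul]
  apply Finset.sum_congr rfl
  intro i _
  rw [S2_eq_Dn]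

lemma S2_zero_right (j : ℕ) : S2 j 0 = if j = 0 then 1 else 0 := by
  unfold S2
  simp [Finset.sum_range_one]
  cases j <;> simp


theorem stmt15 (lam mu : ℝ) (hlam : 0 < lam) (hmu : 0 < mu)
    (k : ℕ) (hk : 1 ≤ k) (t : ℝ) (ht : 0 < t) :
    (k = 1 →
      -deriv (fun u => ∑ j ∈ Finset.range k, iterP lam mu u j) t
        = lam * (1 - Real.exp (-mu)) * Real.exp (-(lam * (1 - Real.exp (-mu))) * t)) ∧
    (2 ≤ k →
      -deriv (fun u => ∑ j ∈ Finset.range k, iterP lam mu u j) t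
        = Real.exp (-lam * t * (1 - Real.exp (-mu))) * (lam * (1 - Real.exp (-mu))) *
            (1 + ∑ i ∈ Finset.Icc 1 (k - 1), (lam * Real.exp (-mu) * t) ^ i *
              (∑ j ∈ Finset.Icc i (k - 1), S2 j i * mu ^ j / (Nat.factorial j : ℝ)))
          - Real.exp (-lam * t * (1 - Real.exp (-mu))) * (lam * Real.exp (-mu)) *
            ∑ i ∈ Finset.Icc 1 (k - 1), (i : ℝ) * (lam * Real.exp (-mu) * t) ^ (i - 1) *
              (∑ j ∈ Finset.Icc i (k - 1), S2 j i * mu ^ j / (Nat.factorial j : ℝ))) := by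
  set a := lam * (1 - Real.exp (-mu)) with ha
  set b := lam * Real.exp (-mu) with hb
  set Cc : ℕ → ℝ := fun i => ∑ j ∈ Finset.Icc i (k - 1),
    S2 j i * mu ^ j / (Nat.factorial j : ℝ) with hCc
  -- rewrite the process as exp(-(a u)) * polynomial
  have hP : (fun u => ∑ j ∈ Finset.range k, iterP lam mu u j)
      = fun u => Real.exp (-(a * u)) * ∑ i ∈ Finset.range k, Cc i * b ^ i * u ^ i := by
    funext u
    have h1 : ∀ j, iterP lam mu u j
        = Real.exp (-(a * u)) * ((mu ^ j / (Nat.factorial j : ℝ)) *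
            ∑ i ∈ Finset.range (j + 1), S2 j i * (b * u) ^ i) := by
      intro j
      unfold iterP
      rw [show lam * u * Real.exp (-mu) = b * u from by rw [hb]; ring,
        show -lam * u * (1 - Real.exp (-mu)) = -(a * u) from by rw [ha]; ring,
        bell_poly]
      ring
    rw [Finset.sum_congr rfl fun j _ => h1 j, ← Finset.mul_sum]
    congr 1
    have h2 : ∑ j ∈ Finset.range k, ((mu ^ j / (Nat.factorial j : ℝ)) *
          ∑ i ∈ Finset.range (j + 1), S2 j i * (b * u) ^ i)
        = ∑ i ∈ Finset.range k, ∑ j ∈ Finset.Icc i (k - 1),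
            (mu ^ j / (Nat.factorial j : ℝ)) * (S2 j i * (b * u) ^ i) := by
      simp_rw [Finset.mul_sum]
      apply Finset.sum_comm'
      intro j i
      simp only [Finset.mem_range, Finset.mem_Icc]
      omega
    rw [h2]
    apply Finset.sum_congr rfl
    intro i _
    rw [hCc]
    simp only
    rw [Finset.sum_mul, Finset.sum_mul]
    apply Finset.sum_congr rfl
    intro j _
    rw [mul_pow]
    ring
  -- derivative
  have hE : HasDerivAt (fun u : ℝ => ∑ i ∈ Finset.range k, Cc i * b ^ i * u ^ i)
      (∑ i ∈ Finset.range k, Cc i * b ^ i * ((i : ℝ) * t ^ (i - 1))) t := by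
    apply HasDerivAt.fun_sum
    intro i _
    exact (hasDerivAt_pow i t).const_mul (Cc i * b ^ i)
  have hA : HasDerivAt (fun u : ℝ => Real.exp (-(a * u))) (Real.exp (-(a * t)) * (-a)) t := by
    have h0 : HasDerivAt (fun u : ℝ => -(a * u)) (-a) t := by
      simpa using ((hasDerivAt_id t).const_mul a).fun_neg
    exact h0.exp
  have hderiv : deriv (fun u => ∑ j ∈ Finset.range k, iterP lam mu u j) t
      = Real.exp (-(a * t)) * (-a) * (∑ i ∈ Finset.range k, Cc i * b ^ i * t ^ i)
        + Real.exp (-(a * t)) *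
            ∑ i ∈ Finset.range k, Cc i * b ^ i * ((i : ℝ) * t ^ (i - 1)) := by
    rw [hP]
    exact (hA.mul hE).deriv
  have hCc0 : Cc 0 = 1 := by
    rw [hCc]
    simp only
    rw [Finset.sum_eq_single 0]
    · simp [S2_zero_right]
    · intro j hj hj0
      rw [S2_zero_right, if_neg hj0]
      simp
    · intro h
      exact absurd (Finset.mem_Icc.mpr ⟨le_refl 0, by omega⟩) h
  have hIco : Finset.Icc 1 (k - 1) = Finset.Ico 1 k := by
    rw [← Finset.Ico_add_one_right_eq_Icc]
    congr 1
    omega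
  constructor
  · -- k = 1
    intro hk1
    subst hk1
    rw [hderiv]
    simp only [Finset.range_one, Finset.sum_singleton, pow_zero, mul_one, Nat.cast_zero,
      zero_mul, mul_zero, add_zero, Nat.zero_sub, Nat.cast_ofNat]
    rw [hCc0]
    have : -(a * t) = -a * t := by ring
    rw [this]
    ring
  · -- k ≥ 2
    intro hk2
    rw [hderiv]
    have hsplit : ∀ f : ℕ → ℝ, ∑ i ∈ Finset.range k, f i
        = f 0 + ∑ i ∈ Finset.Icc 1 (k - 1), f i := by
      intro f
      rw [Finset.range_eq_Ico, Finset.sum_eq_sum_Ico_succ_bot (by omega : 0 < k), hIco]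
    have hG : ∑ i ∈ Finset.range k, Cc i * b ^ i * t ^ i
        = 1 + ∑ i ∈ Finset.Icc 1 (k - 1), (b * t) ^ i * Cc i := by
      rw [hsplit]
      rw [hCc0]
      simp only [pow_zero, mul_one, one_mul]
      congr 1
      apply Finset.sum_congr rfl
      intro i _
      rw [mul_pow]
      ring
    have hG' : ∑ i ∈ Finset.range k, Cc i * b ^ i * ((i : ℝ) * t ^ (i - 1))
        = b * ∑ i ∈ Finset.Icc 1 (k - 1), (i : ℝ) * (b * t) ^ (i - 1) * Cc i := by
      rw [hsplit]
      simp only [pow_zero, Nat.cast_zero, zero_mul, mul_zero, zero_add]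
      rw [Finset.mul_sum]
      apply Finset.sum_congr rfl
      intro i hi
      rw [Finset.mem_Icc] at hi
      have h1 : b ^ i = b * b ^ (i - 1) := by
        conv_lhs => rw [show i = (i - 1) + 1 from by omega]
        rw [pow_succ]
        ring
      rw [h1, mul_pow]
      ring
    rw [hG, hG']
    have harg : -(a * t) = -lam * t * (1 - Real.exp (-mu)) := by rw [ha]; ring
    rw [harg, hb, ha]
    ring
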